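/- In the classical STRIPS relaxation of an ICE action a with n time-points, any plan for the relaxation that achieves q^a_0 after having achieved q^a_1 must execute the gadget actions of a in exactly the cyclic order 0, 1, ..., n-1, i.e., the number of executions of the i-th gadget action equals the number of executions of the 0-th gadget action for all i. -/

import Mathlib

/-- A STRIPS action: precondition, add effects, delete effects. -/
structure StripsAction (P : Type) where
  pre : Set P
  add : Set P
  del : Set P

/-- Execution of a sequence of (named) actions, each applicable in turn. -/
inductive StripsExec {P A : Type} (sem : A → StripsAction P) :
    Set P → List A → Set P → Prop
  | nil (s : Set P) : StripsExec sem s [] s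
  | cons {s s' : Set P} {a : A} {l : List A} :
      (sem a).pre ⊆ s →
      StripsExec sem ((s \ (sem a).del) ∪ (sem a).add) l s' →
      StripsExec sem s (a :: l) s'

private lemma fin_sub_one_val (n : ℕ) [NeZero n] (x : Fin n) :
    (x - 1).val = if x.val = 0 then n - 1 else x.val - 1 := by
  rcases n with _ | m
  · exact absurd rfl (NeZero.ne 0)
  · rw [Fin.sub_def, Fin.val_one']
    simp only [Fin.val_mk]
    have hx := x.isLt
    rcases Nat.eq_zero_or_pos m with h | h
    · subst h
      have h0 : x.val = 0 := by omega
      simp [h0]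
    · have h1 : (1 : ℕ) % (m+1) = 1 := Nat.mod_eq_of_lt (by omega)
      rw [h1]
      rcases Nat.eq_zero_or_pos x.val with h0 | h0
      · rw [if_pos h0, h0, Nat.add_zero, Nat.mod_eq_of_lt (by omega)]
      · rw [if_neg (by omega)]
        have he : m + 1 - 1 + x.val = (x.val - 1) + (m+1) := by omega
        rw [he, Nat.add_mod_right]
        exact Nat.mod_eq_of_lt (by omega)

private lemma gadget_aux {P O : Type} [DecidableEq O] (n : ℕ) [NeZero n]
    (q : Fin n → P) (hq : Function.Injective q)
    (sem : Fin n ⊕ O → StripsAction P)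
    (hgadget : ∀ i : Fin n, (sem (Sum.inl i)).pre = {q i} ∧
      (sem (Sum.inl i)).del = {q i} ∧ (sem (Sum.inl i)).add = {q (i + 1)})
    (hother : ∀ o : O, ∀ i : Fin n,
      q i ∉ (sem (Sum.inr o)).add ∧ q i ∉ (sem (Sum.inr o)).del) :
    ∀ (plan : List (Fin n ⊕ O)) (s s' : Set P), StripsExec sem s plan s' →
      ∀ c : Fin n, (∀ i, q i ∈ s ↔ i = c) →
      ∃ (d : Fin n) (K : ℕ), (∀ i, q i ∈ s' ↔ i = d) ∧
        ∀ i : Fin n, plan.count (Sum.inl i)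
          = K + (if (i - c).val < (d - c).val then 1 else 0) := by
  intro plan s s' hexec
  induction hexec with
  | nil s =>
    intro c hc
    exact ⟨c, 0, hc, fun i => by simp⟩
  | @cons s s' a l hpre _ ih =>
    intro c hc
    cases a with
    | inl j =>
      obtain ⟨hpre', hdel, hadd⟩ := hgadget j
      -- j = c
      have hjs : q j ∈ s := hpre (by rw [hpre']; rfl)
      have hjc : j = c := (hc j).mp hjs
      subst hjc
      -- new counter is j + 1
      have hc' : ∀ i, q i ∈ ((s \ (sem (Sum.inl j)).del) ∪ (sem (Sum.inl j)).add)
          ↔ i = j + 1 := by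
        intro i
        rw [hdel, hadd]
        constructor
        · rintro (⟨his, hnd⟩ | hia)
          · exact absurd (congrArg q ((hc i).mp his)) hnd
          · exact hq hia
        · rintro rfl
          exact Or.inr rfl
      obtain ⟨d, K, hd, hcount⟩ := ih (j + 1) hc'
      refine ⟨d, if d = j then K + 1 else K, hd, fun i => ?_⟩
      have hstep : (List.count (Sum.inl i) (Sum.inl j :: l) : ℕ)
          = l.count (Sum.inl i) + (if i = j then 1 else 0) := by
        rw [List.count_cons]
        by_cases h : i = j
        · subst h
          have hb : ((Sum.inl i : Fin n ⊕ O) == Sum.inl i) = true :=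
            decide_eq_true rfl
          rw [if_pos hb, if_pos rfl]
        · have hb : ((Sum.inl j : Fin n ⊕ O) == Sum.inl i) = false :=
            decide_eq_false (fun e => h e.symm)
          rw [if_neg h, if_neg (by rw [hb]; exact Bool.false_ne_true)]
      rw [hstep, hcount i]
      have h1 : i - (j + 1) = (i - j) - 1 := sub_add_eq_sub_sub _ _ _
      have h2 : d - (j + 1) = (d - j) - 1 := sub_add_eq_sub_sub _ _ _
      rw [h1, h2, fin_sub_one_val, fin_sub_one_val]
      have hic : i = j ↔ (i - j).val = 0 := by
        constructor
        · rintro rfl; simp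
        · intro h
          exact sub_eq_zero.mp (Fin.ext h)
      have hdc : d = j ↔ (d - j).val = 0 := by
        constructor
        · rintro rfl; simp
        · intro h
          exact sub_eq_zero.mp (Fin.ext h)
      set A := (i - j).val with hA
      set B := (d - j).val with hB
      have hAn : A < n := (i - j).isLt
      have hBn : B < n := (d - j).isLt
      have hn := Nat.pos_of_ne_zero (NeZero.ne n)
      simp only [hic, hdc]
      split_ifs <;> omega
    | inr o =>
      have hc' : ∀ i, q i ∈ ((s \ (sem (Sum.inr o)).del) ∪ (sem (Sum.inr o)).add)
          ↔ i = c := by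
        intro i
        obtain ⟨hna, hnd⟩ := hother o i
        constructor
        · rintro (⟨his, -⟩ | hia)
          · exact (hc i).mp his
          · exact absurd hia hna
        · rintro rfl
          exact Or.inl ⟨(hc i).mpr rfl, hnd⟩
      obtain ⟨d, K, hd, hcount⟩ := ih c hc'
      refine ⟨d, K, hd, fun i => ?_⟩
      have hne : ((Sum.inr o : Fin n ⊕ O) == Sum.inl i) = false := rfl
      rw [List.count_cons, hcount i, hne]
      simp

/-- In the unary-counter gadget (actions `act i` with
precondition `{q i}`, delete `{q i}`, add `{q ((i+1) mod n)}`, and no other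
action touching the `q` predicates), any executable action sequence that
starts in a state with exactly `q 0` true among the counters and ends in a
state where `q 0` holds executes the gadget actions in the cyclic order
`0, 1, ..., n-1`: each gadget action `i` occurs exactly as many times as
gadget action `0`. -/
theorem gadget_cyclic_counts {P O : Type} [DecidableEq O] (n : ℕ) [NeZero n]
    (q : Fin n → P) (hq : Function.Injective q)
    (sem : Fin n ⊕ O → StripsAction P)
    (hgadget : ∀ i : Fin n, (sem (Sum.inl i)).pre = {q i} ∧
      (sem (Sum.inl i)).del = {q i} ∧ (sem (Sum.inl i)).add = {q (i + 1)})
    (hother : ∀ o : O, ∀ i : Fin n,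
      q i ∉ (sem (Sum.inr o)).add ∧ q i ∉ (sem (Sum.inr o)).del)
    (init final : Set P) (hinit : ∀ i, q i ∈ init ↔ i = 0)
    (hfinal : q 0 ∈ final)
    (plan : List (Fin n ⊕ O)) (hexec : StripsExec sem init plan final) :
    ∀ i : Fin n, plan.count (Sum.inl i) = plan.count (Sum.inl 0) := by
  obtain ⟨d, K, hd, hcount⟩ :=
    gadget_aux n q hq sem hgadget hother plan init final hexec 0 hinit
  have hd0 : d = 0 := ((hd 0).mp hfinal).symm
  subst hd0
  intro i
  rw [hcount i, hcount 0]
  simp
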